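/- Monotonicity of choice share in a parameter: suppose on an interval T, P(u) is nonnegative with spectral radius < 1 and Σ_k p_{ik}(u) + Σ_l q_{il}(u) = 1 for each i; if q_{ij}(·) is differentiable increasing, and p_{ik}(·) (all k) and q_{il}(·) (all l ≠ j) are differentiable decreasing, then u ↦ π_j^w(u) = w^T (I - P(u))^{-1} q^{(j)}(u) is increasing on T, and for each l ≠ j, u ↦ π_l^w(u) is decreasing on T, for any w ≥ 0. -/

import Mathlib

open Matrix Filter

attribute [local instance] Matrix.linftyOpNormedRing Matrix.linftyOpNormedAlgebra

lemma aux_entry_nnnorm_le {n : ℕ} (A : Matrix (Fin n) (Fin n) ℂ) (i k : Fin n) :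
    ‖A i k‖₊ ≤ ‖A‖₊ := by
  rw [Matrix.linfty_opNNNorm_def]
  calc ‖A i k‖₊ ≤ ∑ j, ‖A i j‖₊ :=
        Finset.single_le_sum (f := fun j => ‖A i j‖₊) (fun _ _ => zero_le) (Finset.mem_univ k)
    _ ≤ _ := Finset.le_sup (f := fun i => ∑ j, ‖A i j‖₊) (Finset.mem_univ i)

lemma aux_continuous_entry {n : ℕ} (i k : Fin n) :
    Continuous (fun A : Matrix (Fin n) (Fin n) ℂ => A i k) := by
  have : LipschitzWith 1 (fun A : Matrix (Fin n) (Fin n) ℂ => A i k) := by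
    refine LipschitzWith.of_dist_le_mul fun x y => ?_
    rw [NNReal.coe_one, one_mul, dist_eq_norm, dist_eq_norm]
    exact_mod_cast aux_entry_nnnorm_le (x - y) i k
  exact this.continuous

lemma aux_neumann {n : ℕ} (A : Matrix (Fin n) (Fin n) ℝ)
    (hspec : ∀ μ ∈ spectrum ℂ (A.map (algebraMap ℝ ℂ)), ‖μ‖ < 1) :
    ∃ S : Matrix (Fin n) (Fin n) ℝ,
      (∀ i k, HasSum (fun N => (A ^ N) i k) (S i k)) ∧
        (1 - A) * S = 1 ∧ S * (1 - A) = 1 := by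
  set B : Matrix (Fin n) (Fin n) ℂ := A.map (algebraMap ℝ ℂ) with hBdef
  have hBpow : ∀ N : ℕ, B ^ N = (A ^ N).map (algebraMap ℝ ℂ) := by
    intro N
    have h := map_pow (algebraMap ℝ ℂ).mapMatrix A N
    simpa [RingHom.mapMatrix_apply, hBdef] using h.symm
  -- spectral radius < 1
  have hρ : spectralRadius ℂ B < 1 := by
    rcases Set.eq_empty_or_nonempty (spectrum ℂ B) with h | h
    · rw [spectralRadius]
      simp [h]
    · have := spectrum.spectralRadius_lt_of_forall_lt_of_nonempty h
        (r := 1) (fun k hk => by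
          have := hspec k hk
          exact_mod_cast this)
      simpa using this
  obtain ⟨r, hρr, hr1⟩ := exists_between hρ
  have hrtop : r ≠ ⊤ := (hr1.trans (by norm_num)).ne
  have hlim := spectrum.pow_nnnorm_pow_one_div_tendsto_nhds_spectralRadius B
  have hev : ∀ᶠ N : ℕ in atTop, (‖B ^ N‖₊ : ENNReal) ^ (1 / (N : ℝ)) < r :=
    hlim.eventually_lt_const hρr
  set t : NNReal := r.toNNReal with htdef
  have hrt : (t : ENNReal) = r := ENNReal.coe_toNNReal hrtop
  have ht1 : t < 1 := by
    rw [← ENNReal.coe_lt_one_iff, hrt]; exact hr1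
  have hev2 : ∀ᶠ N : ℕ in atTop, ‖B ^ N‖ ≤ (t : ℝ) ^ N := by
    filter_upwards [hev, Filter.eventually_ge_atTop 1] with N hN hN1
    have hNne : (N : ℝ) ≠ 0 := by positivity
    have h1 : (‖B ^ N‖₊ : ENNReal) ≤ r ^ N := by
      calc (‖B ^ N‖₊ : ENNReal)
          = ((‖B ^ N‖₊ : ENNReal) ^ (1 / (N : ℝ))) ^ (N : ℝ) := by
            rw [← ENNReal.rpow_mul, one_div, inv_mul_cancel₀ hNne, ENNReal.rpow_one]
        _ ≤ r ^ (N : ℝ) := ENNReal.rpow_le_rpow hN.le (by positivity)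
        _ = r ^ N := by rw [ENNReal.rpow_natCast]
    rw [← hrt, ← ENNReal.coe_pow, ENNReal.coe_le_coe] at h1
    exact_mod_cast h1
  have hsum : Summable (fun N : ℕ => B ^ N) := by
    refine Summable.of_norm_bounded_eventually_nat (g := fun N => (t : ℝ) ^ N) ?_ hev2
    exact summable_geometric_of_lt_one t.coe_nonneg ht1
  have hSB := hsum.hasSum
  set SB : Matrix (Fin n) (Fin n) ℂ := ∑' N, B ^ N with hSBdef
  have hpow0 : Tendsto (fun N : ℕ => B ^ N) atTop (nhds 0) :=
    hsum.tendsto_atTop_zero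
  -- (1 - B) * SB = 1
  have hmulL : (1 - B) * SB = 1 := by
    have h1 : Tendsto (fun M => ∑ N ∈ Finset.range M, (1 - B) * B ^ N) atTop
        (nhds ((1 - B) * SB)) := (hSB.mul_left _).tendsto_sum_nat
    have h2 : ∀ M, ∑ N ∈ Finset.range M, (1 - B) * B ^ N = 1 - B ^ M := by
      intro M
      rw [← Finset.mul_sum, ← neg_sub B 1, neg_mul, mul_geom_sum, neg_sub]
    simp only [h2] at h1
    have h3 : Tendsto (fun M : ℕ => 1 - B ^ M) atTop (nhds ((1 : Matrix (Fin n) (Fin n) ℂ) - 0)) :=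
      tendsto_const_nhds.sub hpow0
    rw [sub_zero] at h3
    exact tendsto_nhds_unique h1 h3
  have hmulR : SB * (1 - B) = 1 := by
    have h1 : Tendsto (fun M => ∑ N ∈ Finset.range M, B ^ N * (1 - B)) atTop
        (nhds (SB * (1 - B))) := (hSB.mul_right _).tendsto_sum_nat
    have h2 : ∀ M, ∑ N ∈ Finset.range M, B ^ N * (1 - B) = 1 - B ^ M := by
      intro M
      rw [← Finset.sum_mul, ← neg_sub B 1, mul_neg, geom_sum_mul, neg_sub]
    simp only [h2] at h1
    have h3 : Tendsto (fun M : ℕ => 1 - B ^ M) atTop (nhds ((1 : Matrix (Fin n) (Fin n) ℂ) - 0)) :=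
      tendsto_const_nhds.sub hpow0
    rw [sub_zero] at h3
    exact tendsto_nhds_unique h1 h3
  -- entrywise sums
  have hentryC : ∀ i k, HasSum (fun N => (B ^ N) i k) (SB i k) := by
    intro i k
    have : Continuous (fun M : Matrix (Fin n) (Fin n) ℂ => M i k) := aux_continuous_entry i k
    exact hSB.map (AddMonoidHom.mk' (fun M : Matrix (Fin n) (Fin n) ℂ => M i k)
      (fun _ _ => rfl)) this
  set S : Matrix (Fin n) (Fin n) ℝ := Matrix.of fun i k => (SB i k).re with hSdef
  have hentry : ∀ i k, HasSum (fun N => (A ^ N) i k) (S i k) := by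
    intro i k
    have h := (hentryC i k).mapL Complex.reCLM
    simp only [hBpow, Matrix.map_apply] at h
    simpa [hSdef] using h
  have him : ∀ i k, (SB i k).im = 0 := by
    intro i k
    have h := (hentryC i k).mapL Complex.imCLM
    simp only [hBpow, Matrix.map_apply] at h
    have h0 : HasSum (fun _ : ℕ => (0 : ℝ)) 0 := hasSum_zero
    have : HasSum (fun N : ℕ => (0 : ℝ)) ((SB i k).im) := by simpa using h
    exact (hasSum_zero.unique this).symm
  have hSmap : SB = S.map (algebraMap ℝ ℂ) := by
    ext i k
    apply Complex.ext
    · simp [hSdef]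
    · simp [hSdef, him i k]
  have hinj : ∀ M M' : Matrix (Fin n) (Fin n) ℝ,
      M.map (algebraMap ℝ ℂ) = M'.map (algebraMap ℝ ℂ) → M = M' := by
    intro M M' h
    ext i k
    have h2 : M.map (algebraMap ℝ ℂ) i k = M'.map (algebraMap ℝ ℂ) i k := by rw [h]
    simp only [Matrix.map_apply] at h2
    exact_mod_cast h2
  have hF : ∀ X Y : Matrix (Fin n) (Fin n) ℝ,
      ((X * Y).map (algebraMap ℝ ℂ)) = X.map (algebraMap ℝ ℂ) * Y.map (algebraMap ℝ ℂ) :=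
    fun X Y => by
      simpa [RingHom.mapMatrix_apply] using map_mul (algebraMap ℝ ℂ).mapMatrix X Y
  have hone : (1 : Matrix (Fin n) (Fin n) ℝ).map (algebraMap ℝ ℂ) = 1 := by
    simpa [RingHom.mapMatrix_apply] using map_one (algebraMap ℝ ℂ).mapMatrix
  have h1A : (1 - A).map (algebraMap ℝ ℂ) = 1 - B := by
    have hs := map_sub (algebraMap ℝ ℂ).mapMatrix 1 A
    simp only [RingHom.mapMatrix_apply] at hs
    rw [hs, hone, hBdef]
  refine ⟨S, hentry, hinj _ _ ?_, hinj _ _ ?_⟩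
  · rw [hF, h1A, ← hSmap, hmulL, hone]
  · rw [hF, h1A, ← hSmap, hmulR, hone]

lemma aux_pow_entry {n : ℕ} {A A' : Matrix (Fin n) (Fin n) ℝ}
    (hA : ∀ i k, 0 ≤ A i k) (hle : ∀ i k, A i k ≤ A' i k) :
    ∀ (N : ℕ) (i k : Fin n), 0 ≤ (A ^ N) i k ∧ (A ^ N) i k ≤ (A' ^ N) i k := by
  intro N
  induction N with
  | zero =>
    intro i k
    simp only [pow_zero]
    exact ⟨by rw [Matrix.one_apply]; positivity, le_refl _⟩
  | succ N ih =>
    intro i k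
    simp only [pow_succ, Matrix.mul_apply]
    constructor
    · exact Finset.sum_nonneg fun m _ => mul_nonneg (ih i m).1 (hA m k)
    · refine Finset.sum_le_sum fun m _ => ?_
      exact mul_le_mul (ih i m).2 (hle m k) (hA m k) (le_trans (ih i m).1 (ih i m).2)

lemma aux_inv_one_sub {n : ℕ} (A : Matrix (Fin n) (Fin n) ℝ)
    (hspec : ∀ μ ∈ spectrum ℂ (A.map (algebraMap ℝ ℂ)), ‖μ‖ < 1) :
    (∀ i k, HasSum (fun N => (A ^ N) i k) ((1 - A)⁻¹ i k)) ∧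
      (1 - A)⁻¹ * (1 - A) = 1 := by
  obtain ⟨S, hS, h1, h2⟩ := aux_neumann A hspec
  have hinv : (1 - A)⁻¹ = S := Matrix.inv_eq_right_inv h1
  rw [hinv]
  exact ⟨hS, h2⟩

/-- Monotonicity of choice share in a parameter: on an interval
`T`, if `P u` is nonnegative with spectral radius < 1 and rows of `(P u, q u)`
sum to 1, `q · i j` is differentiable and increasing, and the `p · i k` and
`q · i l` (`l ≠ j`) are differentiable and decreasing, then
`u ↦ π_j^w(u) = wᵀ (I - P u)⁻¹ q⁽ʲ⁾(u)` is increasing on `T` and, for `l ≠ j`,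
`u ↦ π_l^w(u)` is decreasing on `T`, for any `w ≥ 0`. -/
theorem choice_share_monotone_in_parameter {n m : ℕ}
    (P : ℝ → Matrix (Fin n) (Fin n) ℝ) (q : ℝ → Fin n → Fin m → ℝ)
    (j : Fin m) (w : Fin n → ℝ) (hw : ∀ i, 0 ≤ w i)
    (T : Set ℝ) (hT : T.OrdConnected)
    (hPnonneg : ∀ u ∈ T, ∀ i k, 0 ≤ P u i k)
    (hqnonneg : ∀ u ∈ T, ∀ i l, 0 ≤ q u i l)
    (hrow : ∀ u ∈ T, ∀ i, (∑ k, P u i k) + (∑ l, q u i l) = 1)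
    (hspec : ∀ u ∈ T, ∀ μ ∈ spectrum ℂ ((P u).map (algebraMap ℝ ℂ)), ‖μ‖ < 1)
    (hqj_diff : ∀ i, DifferentiableOn ℝ (fun u => q u i j) T)
    (hqj_mono : ∀ i, MonotoneOn (fun u => q u i j) T)
    (hp_diff : ∀ i k, DifferentiableOn ℝ (fun u => P u i k) T)
    (hp_anti : ∀ i k, AntitoneOn (fun u => P u i k) T)
    (hql_diff : ∀ i, ∀ l ≠ j, DifferentiableOn ℝ (fun u => q u i l) T)
    (hql_anti : ∀ i, ∀ l ≠ j, AntitoneOn (fun u => q u i l) T) :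
    MonotoneOn (fun u => w ⬝ᵥ ((1 - P u)⁻¹ *ᵥ fun i => q u i j)) T ∧
      ∀ l ≠ j, AntitoneOn (fun u => w ⬝ᵥ ((1 - P u)⁻¹ *ᵥ fun i => q u i l)) T := by
  have hinv : ∀ u ∈ T, (∀ i k, HasSum (fun N => (P u ^ N) i k) ((1 - P u)⁻¹ i k)) ∧
      (1 - P u)⁻¹ * (1 - P u) = 1 := fun u hu => aux_inv_one_sub (P u) (hspec u hu)
  have hSnonneg : ∀ u ∈ T, ∀ i k, 0 ≤ (1 - P u)⁻¹ i k := by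
    intro u hu i k
    exact hasSum_le
      (fun N => (aux_pow_entry (hPnonneg u hu) (fun _ _ => le_refl _) N i k).1)
      hasSum_zero ((hinv u hu).1 i k)
  have hSmono : ∀ u₁ ∈ T, ∀ u₂ ∈ T, u₁ ≤ u₂ →
      ∀ i k, (1 - P u₂)⁻¹ i k ≤ (1 - P u₁)⁻¹ i k := by
    intro u₁ h1 u₂ h2 h12 i k
    exact hasSum_le
      (fun N => (aux_pow_entry (hPnonneg u₂ h2)
        (fun i k => hp_anti i k h1 h2 h12) N i k).2)
      ((hinv u₂ h2).1 i k) ((hinv u₁ h1).1 i k)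
  have hanti : ∀ l ≠ j,
      AntitoneOn (fun u => w ⬝ᵥ ((1 - P u)⁻¹ *ᵥ fun i => q u i l)) T := by
    intro l hl u₁ h1 u₂ h2 h12
    simp only [dotProduct, Matrix.mulVec]
    refine Finset.sum_le_sum fun i _ => ?_
    refine mul_le_mul_of_nonneg_left ?_ (hw i)
    refine Finset.sum_le_sum fun k _ => ?_
    exact mul_le_mul (hSmono u₁ h1 u₂ h2 h12 i k) (hql_anti k l hl h1 h2 h12)
      (hqnonneg u₂ h2 k l) (hSnonneg u₁ h1 i k)
  have hones : ∀ u ∈ T, (1 - P u)⁻¹ *ᵥ (fun i => ∑ l, q u i l) = fun _ => 1 := by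
    intro u hu
    have hv : (fun i => ∑ l, q u i l) = (1 - P u) *ᵥ (fun _ => (1 : ℝ)) := by
      funext i
      have h1 : ((1 - P u) *ᵥ (fun _ => (1 : ℝ))) i
          = ∑ k, ((1 : Matrix (Fin n) (Fin n) ℝ) i k - P u i k) := by
        simp [Matrix.mulVec, dotProduct, Matrix.sub_apply]
      have h2 : ∑ k, (1 : Matrix (Fin n) (Fin n) ℝ) i k = 1 := by
        simp [Matrix.one_apply]
      rw [h1, Finset.sum_sub_distrib, h2]
      have := hrow u hu i
      linarith
    rw [hv, Matrix.mulVec_mulVec, (hinv u hu).2, Matrix.one_mulVec]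
  have hexp : ∀ (M : Matrix (Fin n) (Fin n) ℝ) (v : Fin n → ℝ),
      w ⬝ᵥ (M *ᵥ v) = ∑ i, ∑ k, w i * (M i k * v k) := by
    intro M v
    simp [dotProduct, Matrix.mulVec, Finset.mul_sum]
  have hkey : ∀ u ∈ T, w ⬝ᵥ ((1 - P u)⁻¹ *ᵥ fun i => q u i j)
      = (∑ i, w i) - ∑ l ∈ Finset.univ.erase j,
          w ⬝ᵥ ((1 - P u)⁻¹ *ᵥ fun i => q u i l) := by
    intro u hu
    have h2 : ∑ l, w ⬝ᵥ ((1 - P u)⁻¹ *ᵥ fun i => q u i l)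
        = w ⬝ᵥ ((1 - P u)⁻¹ *ᵥ fun i => ∑ l, q u i l) := by
      simp only [hexp, Finset.mul_sum]
      rw [Finset.sum_comm]
      refine Finset.sum_congr rfl fun i _ => ?_
      rw [Finset.sum_comm]
    have h1 : ∑ l, w ⬝ᵥ ((1 - P u)⁻¹ *ᵥ fun i => q u i l) = ∑ i, w i := by
      rw [h2, hones u hu]
      simp [dotProduct]
    rw [← h1, ← Finset.add_sum_erase _ _ (Finset.mem_univ j)]
    ring
  refine ⟨?_, hanti⟩
  intro u₁ h1 u₂ h2 h12
  simp only
  rw [hkey u₁ h1, hkey u₂ h2]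
  have hsum : ∑ l ∈ Finset.univ.erase j,
      w ⬝ᵥ ((1 - P u₂)⁻¹ *ᵥ fun i => q u₂ i l)
      ≤ ∑ l ∈ Finset.univ.erase j,
      w ⬝ᵥ ((1 - P u₁)⁻¹ *ᵥ fun i => q u₁ i l) :=
    Finset.sum_le_sum fun l hl => hanti l (Finset.ne_of_mem_erase hl) h1 h2 h12
  linarith
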